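/- Let F be a field, n ≥ 2, and V an n-dimensional F-vector space. A special configuration is a tuple (L_0, …, L_{n−1}, M_0, …, M_{n−1}) of one-dimensional subspaces of V such that L_0, …, L_{n−1} together span V (so V = L_0 ⊕ ⋯ ⊕ L_{n−1}), and for each i (indices taken modulo n) M_i is contained in L_i + L_{i+1} with M_i ≠ L_i and M_i ≠ L_{i+1}. Then: (1) for each i there is a well-defined F-linear isomorphism φ_i : L_i → L_{i+1} characterized by u + φ_i(u) ∈ M_i for all u ∈ L_i, and the composition φ_{n−1} ∘ ⋯ ∘ φ_1 ∘ φ_0 : L_0 → L_0 is multiplication by a scalar a ∈ F^*, called the generalized cross-ratio of the configuration; (2) the generalized cross-ratio is invariant under the action of GL(V), and two special configurations have the same generalized cross-ratio if and only if they lie in the same GL(V)-orbit; (3) every element a ∈ F^* occurs as the generalized cross-ratio of some special configuration. In other words, the generalized cross-ratio induces a bijection between the set of special configurations modulo projective equivalence and F^* = ℙ^1(F) ∖ {0, ∞}. -/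

import Mathlib

open Module

variable (F : Type*) [Field F] {V : Type*} [AddCommGroup V] [Module F V]

/-- A special configuration of `2n` lines in an `n`-dimensional space `V`: lines
`L_0, …, L_{n−1}` spanning `V` (hence `V = L_0 ⊕ ⋯ ⊕ L_{n−1}`), and for each `i` (mod `n`)
a line `M_i ⊆ L_i + L_{i+1}` with `M_i ≠ L_i`, `M_i ≠ L_{i+1}`. -/
def IsSpecialConfiguration {n : ℕ} [NeZero n] (L M : Fin n → Submodule F V) : Prop :=
  (∀ i, finrank F (L i) = 1) ∧ (∀ i, finrank F (M i) = 1) ∧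
  (⨆ i, L i) = ⊤ ∧
  ∀ i, M i ≤ L i ⊔ L (i + 1) ∧ M i ≠ L i ∧ M i ≠ L (i + 1)

/-- `a ∈ F^*` is the generalized cross-ratio of the configuration `(L, M)`:
any chain `u_0 ∈ L_0, u_1 ∈ L_1, …, u_{n−1} ∈ L_{n−1}, u_n ∈ L_0` with
`u_i + u_{i+1} ∈ M_i` for all `i` (i.e. `u_{i+1} = φ_i(u_i)`) closes up to `u_n = a·u_0`;
thus the composition `φ_{n−1} ∘ ⋯ ∘ φ_0 : L_0 → L_0` is multiplication by `a`. -/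
def IsGenCrossRatio {n : ℕ} [NeZero n] (L M : Fin n → Submodule F V) (a : Fˣ) : Prop :=
  ∀ u : Fin (n + 1) → V,
    (∀ i : Fin n, u i.castSucc ∈ L i) → u (Fin.last n) ∈ L 0 →
    (∀ i : Fin n, u i.castSucc + u i.succ ∈ M i) →
    u (Fin.last n) = (a : F) • u 0

open Submodule
open Fin.NatCast

section Aux
variable {F}

lemma fin_succ_ne {n : ℕ} [NeZero n] (hn : 2 ≤ n) (i : Fin n) : i + 1 ≠ i := by
  intro h
  have h1 : (1 : Fin n) = 0 := by
    have := add_right_cancel (b := i) (a := (1:Fin n)) (c := 0) (by rwa [add_comm, zero_add])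
    exact this
  have : (1 : Fin n).val = 1 := Fin.val_one' n |>.trans (Nat.mod_eq_of_lt (by omega))
  rw [h1] at this
  simp at this

lemma coord_eq {n : ℕ} [NeZero n] (e : Basis (Fin n) F V) {i j : Fin n} (hij : j ≠ i)
    {p q s c : F} (h : p • e i + q • e j = s • (e i + c • e j)) : p = s ∧ q = s * c := by
  have hi := congrArg (fun v => e.repr v i) h
  have hj := congrArg (fun v => e.repr v j) h
  simp [Finsupp.single_apply, hij, Ne.symm hij, mul_comm] at hi hj
  exact ⟨hi, hj⟩

lemma mem_normal_span {n : ℕ} [NeZero n] (hn : 2 ≤ n) (e : Basis (Fin n) F V) (i : Fin n)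
    (c : F) {p q : F} (h : p • e i + q • e (i + 1) ∈ span F {e i + c • e (i + 1)}) :
    q = c * p := by
  obtain ⟨s, hs⟩ := mem_span_singleton.mp h
  obtain ⟨h1, h2⟩ := coord_eq e (fin_succ_ne hn i) hs.symm
  rw [h2, h1, mul_comm]

lemma chain_eval {n : ℕ} [NeZero n] (hn : 2 ≤ n) (e : Basis (Fin n) F V) (c : Fin n → Fˣ)
    (u : Fin (n + 1) → V)
    (h1 : ∀ i : Fin n, u i.castSucc ∈ span F {e i})
    (h2 : u (Fin.last n) ∈ span F {e 0})
    (h3 : ∀ i : Fin n, u i.castSucc + u i.succ ∈ span F {e i + (c i : F) • e (i + 1)}) :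
    u (Fin.last n) = ((∏ i, c i : Fˣ) : F) • u 0 := by
  have hnpos : 0 < n := by omega
  have hs : ∀ j : Fin (n + 1), ∃ t : F, u j = t • e ((j.val : Fin n)) := by
    intro j
    induction j using Fin.lastCases with
    | last =>
      obtain ⟨t, ht⟩ := mem_span_singleton.mp h2
      exact ⟨t, by rw [← ht]; simp [Fin.natCast_self]⟩
    | cast i =>
      obtain ⟨t, ht⟩ := mem_span_singleton.mp (h1 i)
      exact ⟨t, by rw [← ht]; simp [Fin.cast_val_eq_self]⟩
  choose t ht using hs
  have hstep : ∀ i : Fin n, t i.succ = (c i : F) * t i.castSucc := by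
    intro i
    have h := h3 i
    rw [ht i.castSucc, ht i.succ] at h
    have hcs : ((i.castSucc.val : ℕ) : Fin n) = i := by simp [Fin.cast_val_eq_self]
    have hsc : ((i.succ.val : ℕ) : Fin n) = i + 1 := by
      simp [Fin.val_succ]
    rw [hcs, hsc] at h
    exact mem_normal_span hn e i _ h
  have key : ∀ k : ℕ, (hk : k ≤ n) → t ⟨k, by omega⟩ =
      (∏ j ∈ Finset.range k, (c (j : Fin n) : F)) * t 0 := by
    intro k
    induction k with
    | zero => intro _; simp
    | succ m ih =>
      intro hk
      have hm : m ≤ n := by omega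
      have hmn : m < n := by omega
      have e1 : (⟨m + 1, by omega⟩ : Fin (n + 1)) = (⟨m, hmn⟩ : Fin n).succ := rfl
      have e2 : (⟨m, by omega⟩ : Fin (n + 1)) = (⟨m, hmn⟩ : Fin n).castSucc := rfl
      rw [e1, hstep ⟨m, hmn⟩, ← e2, ih hm, Finset.prod_range_succ]
      have : ((m : ℕ) : Fin n) = ⟨m, hmn⟩ := by
        ext; simp [Fin.val_natCast, Nat.mod_eq_of_lt hmn]
      rw [this]; ring
  have hlast := key n le_rfl
  have hprod : (∏ j ∈ Finset.range n, (c (j : Fin n) : F)) = ((∏ i, c i : Fˣ) : F) := by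
    rw [← Fin.prod_univ_eq_prod_range (fun j => (c (j : Fin n) : F)) n]
    simp [Fin.cast_val_eq_self]
  have hl : Fin.last n = ⟨n, by omega⟩ := rfl
  rw [hl, ht ⟨n, by omega⟩, hlast, hprod]
  have hu0 : u 0 = t 0 • e 0 := by
    rw [ht 0]; congr 1
  rw [hu0]
  simp [Fin.natCast_self, mul_smul]

lemma crossRatio_of_normal {n : ℕ} [NeZero n] (hn : 2 ≤ n) (e : Basis (Fin n) F V)
    (c : Fin n → Fˣ) (L M : Fin n → Submodule F V)
    (hL : ∀ i, L i = span F {e i})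
    (hM : ∀ i, M i = span F {e i + (c i : F) • e (i + 1)}) :
    IsGenCrossRatio F L M (∏ i, c i) := by
  intro u p1 p2 p3
  exact chain_eval hn e c u (fun i => (hL i) ▸ p1 i) ((hL 0) ▸ p2) (fun i => (hM i) ▸ p3 i)

lemma crossRatio_unique_of_normal {n : ℕ} [NeZero n] (hn : 2 ≤ n) (e : Basis (Fin n) F V)
    (c : Fin n → Fˣ) (L M : Fin n → Submodule F V)
    (hL : ∀ i, L i = span F {e i})
    (hM : ∀ i, M i = span F {e i + (c i : F) • e (i + 1)})
    {a : Fˣ} (ha : IsGenCrossRatio F L M a) : a = ∏ i, c i := by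
  set u : Fin (n + 1) → V := fun j =>
    (∏ k ∈ Finset.range j.val, (c (k : Fin n) : F)) • e ((j.val : Fin n)) with hu
  have p1 : ∀ i : Fin n, u i.castSucc ∈ L i := by
    intro i
    rw [hL i, hu]
    simp only [Fin.coe_castSucc, Fin.cast_val_eq_self]
    exact smul_mem _ _ (mem_span_singleton_self _)
  have p2 : u (Fin.last n) ∈ L 0 := by
    rw [hL 0, hu]
    simp only [Fin.val_last, Fin.natCast_self]
    exact smul_mem _ _ (mem_span_singleton_self _)
  have p3 : ∀ i : Fin n, u i.castSucc + u i.succ ∈ M i := by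
    intro i
    rw [hM i, hu]
    simp only [Fin.coe_castSucc, Fin.val_succ, Fin.cast_val_eq_self]
    have hc1 : ((i.val + 1 : ℕ) : Fin n) = i + 1 := by push_cast [Fin.cast_val_eq_self]; rfl
    rw [hc1, Finset.prod_range_succ, Fin.cast_val_eq_self]
    have : (∏ k ∈ Finset.range i.val, (c (k : Fin n) : F)) • e i +
        ((∏ k ∈ Finset.range i.val, (c (k : Fin n) : F)) * (c i : F)) • e (i + 1) =
        (∏ k ∈ Finset.range i.val, (c (k : Fin n) : F)) • (e i + (c i : F) • e (i + 1)) := by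
      rw [smul_add, mul_smul]
    rw [this]
    exact smul_mem _ _ (mem_span_singleton_self _)
  have := ha u p1 p2 p3
  rw [hu] at this
  simp only [Fin.val_last, Fin.natCast_self, Fin.val_zero, Finset.range_zero,
    Finset.prod_empty, one_smul, Nat.cast_zero] at this
  have hprod : (∏ j ∈ Finset.range n, (c (j : Fin n) : F)) = ((∏ i, c i : Fˣ) : F) := by
    rw [← Fin.prod_univ_eq_prod_range (fun j => (c (j : Fin n) : F)) n]
    simp [Fin.cast_val_eq_self]
  rw [hprod] at this
  have hcoord := congrArg (fun v => e.repr v 0) this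
  simp at hcoord
  exact Units.ext (by push_cast; exact hcoord.symm)

lemma normal_gen_ne_zero {n : ℕ} [NeZero n] (hn : 2 ≤ n) (e : Basis (Fin n) F V)
    (i : Fin n) (c : F) : e i + c • e (i + 1) ≠ 0 := by
  intro h
  have := congrArg (fun v => e.repr v i) h
  simp [Finsupp.single_apply, fin_succ_ne hn i] at this

lemma normal_special {n : ℕ} [NeZero n] (hn : 2 ≤ n) (e : Basis (Fin n) F V)
    (c : Fin n → Fˣ) :
    IsSpecialConfiguration F (fun i => span F {e i})
      (fun i => span F {e i + (c i : F) • e (i + 1)}) := by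
  refine ⟨fun i => finrank_span_singleton (e.ne_zero i),
    fun i => finrank_span_singleton (normal_gen_ne_zero hn e i _), ?_, fun i => ⟨?_, ?_, ?_⟩⟩
  · rw [← span_range_eq_iSup]; exact e.span_eq
  · rw [span_le, Set.singleton_subset_iff]
    exact add_mem (mem_sup_left (mem_span_singleton_self _))
      (mem_sup_right (smul_mem _ _ (mem_span_singleton_self _)))
  · intro h
    have hw : e i + (c i : F) • e (i + 1) ∈ span F {e i} := by
      simp only at h
      rw [← h]; exact mem_span_singleton_self _
    obtain ⟨t, ht⟩ := mem_span_singleton.mp hw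
    have h2 := congrArg (fun v => e.repr v (i + 1)) ht
    simp [Finsupp.single_apply, fin_succ_ne hn i, (show n ≠ 1 by omega)] at h2
    exact (c i).ne_zero h2.symm
  · intro h
    have hw : e i + (c i : F) • e (i + 1) ∈ span F {e (i + 1)} := by
      simp only at h
      rw [← h]; exact mem_span_singleton_self _
    obtain ⟨t, ht⟩ := mem_span_singleton.mp hw
    have h2 := congrArg (fun v => e.repr v i) ht
    simp [Finsupp.single_apply, fin_succ_ne hn i, (show n ≠ 1 by omega)] at h2

lemma config_normal {n : ℕ} [NeZero n] (hn : 2 ≤ n) [FiniteDimensional F V]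
    (hV : finrank F V = n) {L M : Fin n → Submodule F V}
    (hc : IsSpecialConfiguration F L M) :
    ∃ (e : Basis (Fin n) F V) (c : Fin n → Fˣ),
      (∀ i, L i = span F {e i}) ∧ (∀ i, M i = span F {e i + (c i : F) • e (i + 1)}) := by
  obtain ⟨hL1, hM1, htop, hLM⟩ := hc
  have hgen : ∀ i, ∃ v : V, v ≠ 0 ∧ L i = span F {v} := by
    intro i
    have hne : L i ≠ ⊥ := by
      intro h; have h2 := hL1 i; rw [h] at h2; simpa using h2
    obtain ⟨v, hv, hv0⟩ := Submodule.ne_bot_iff _ |>.mp hne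
    refine ⟨v, hv0, ?_⟩
    refine (Submodule.eq_of_le_of_finrank_le ?_ ?_).symm
    · rw [span_le, Set.singleton_subset_iff]; exact hv
    · rw [hL1 i, finrank_span_singleton hv0]
  choose v hv0 hvL using hgen
  have le_span : ⊤ ≤ span F (Set.range v) := by
    rw [span_range_eq_iSup]
    calc (⊤ : Submodule F V) = ⨆ i, L i := htop.symm
    _ ≤ ⨆ i, span F {v i} := by
        apply iSup_mono; intro i; rw [hvL i]
  have card_eq : Fintype.card (Fin n) = finrank F V := by simp [hV]
  set e := basisOfTopLeSpanOfCardEqFinrank v le_span card_eq with he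
  have hee : ⇑e = v := coe_basisOfTopLeSpanOfCardEqFinrank v le_span card_eq
  have hLe : ∀ i, L i = span F {e i} := by intro i; rw [hee]; exact hvL i
  have hMgen : ∀ i, ∃ cu : Fˣ, M i = span F {e i + (cu : F) • e (i + 1)} := by
    intro i
    have hne : M i ≠ ⊥ := by
      intro h; have h2 := hM1 i; rw [h] at h2; simpa using h2
    obtain ⟨m, hm, hm0⟩ := Submodule.ne_bot_iff _ |>.mp hne
    have hMm : M i = span F {m} := by
      refine (Submodule.eq_of_le_of_finrank_le ?_ ?_).symm
      · rw [span_le, Set.singleton_subset_iff]; exact hm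
      · rw [hM1 i, finrank_span_singleton hm0]
    have hmem : m ∈ span F {e i, e (i + 1)} := by
      have h1 : m ∈ L i ⊔ L (i + 1) := (hLM i).1 hm
      rw [hLe i, hLe (i + 1), ← span_union, Set.singleton_union] at h1
      exact h1
    obtain ⟨p, q, hpq⟩ := Submodule.mem_span_pair.mp hmem
    have hp : p ≠ 0 := by
      intro h
      have hm' : m = q • e (i + 1) := by rw [← hpq, h]; simp
      have hq0 : q ≠ 0 := fun hq => hm0 (by rw [hm', hq, zero_smul])
      apply (hLM i).2.2
      rw [hMm, hLe (i + 1), hm', span_singleton_smul_eq (IsUnit.mk0 q hq0)]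
    have hq : q ≠ 0 := by
      intro h
      have hm' : m = p • e i := by rw [← hpq, h]; simp
      apply (hLM i).2.1
      rw [hMm, hLe i, hm', span_singleton_smul_eq (IsUnit.mk0 p hp)]
    refine ⟨Units.mk0 (q * p⁻¹) (by simp [hp, hq]), ?_⟩
    have hmp : m = p • (e i + (q * p⁻¹) • e (i + 1)) := by
      rw [← hpq, smul_add, smul_smul]
      field_simp
    rw [hMm, hmp, span_singleton_smul_eq (IsUnit.mk0 p hp)]
    rfl
  choose cu hcu using hMgen
  exact ⟨e, cu, hLe, hcu⟩

lemma normal_inf_left {n : ℕ} [NeZero n] (hn : 2 ≤ n) (e : Basis (Fin n) F V) (i : Fin n)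
    {c : F} (hc : c ≠ 0) {x : V} (h1 : x ∈ span F {e i + c • e (i + 1)})
    (h2 : x ∈ span F {e i}) : x = 0 := by
  obtain ⟨s, hs⟩ := mem_span_singleton.mp h1
  obtain ⟨t, ht⟩ := mem_span_singleton.mp h2
  have heq : t • e i + (0 : F) • e (i + 1) = s • (e i + c • e (i + 1)) := by
    rw [zero_smul, add_zero, ht, ← hs]
  obtain ⟨_, h4⟩ := coord_eq e (fin_succ_ne hn i) heq
  have hs0 : s = 0 := by
    rcases mul_eq_zero.mp h4.symm with h | h
    · exact h
    · exact absurd h hc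
  rw [← hs, hs0, zero_smul]

lemma normal_inf_right {n : ℕ} [NeZero n] (hn : 2 ≤ n) (e : Basis (Fin n) F V) (i : Fin n)
    (c : F) {x : V} (h1 : x ∈ span F {e i + c • e (i + 1)})
    (h2 : x ∈ span F {e (i + 1)}) : x = 0 := by
  obtain ⟨s, hs⟩ := mem_span_singleton.mp h1
  obtain ⟨t, ht⟩ := mem_span_singleton.mp h2
  have heq : (0 : F) • e i + t • e (i + 1) = s • (e i + c • e (i + 1)) := by
    rw [zero_smul, zero_add, ht, ← hs]
  obtain ⟨h3, _⟩ := coord_eq e (fin_succ_ne hn i) heq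
  rw [← hs, ← h3, zero_smul]

lemma phi_lemma {n : ℕ} [NeZero n] (hn : 2 ≤ n) (e : Basis (Fin n) F V)
    (c : Fin n → Fˣ) (L M : Fin n → Submodule F V)
    (hL : ∀ i, L i = span F {e i})
    (hM : ∀ i, M i = span F {e i + (c i : F) • e (i + 1)}) (i : Fin n) :
    (∃! φ : L i →ₗ[F] L (i + 1), ∀ u : L i, ((u : V) + (φ u : V)) ∈ M i) ∧
    (∀ φ : L i →ₗ[F] L (i + 1),
      (∀ u : L i, ((u : V) + (φ u : V)) ∈ M i) → Function.Bijective φ) := by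
  have hfr : ∀ j, finrank F (L j) = 1 := by
    intro j; rw [hL j]; exact finrank_span_singleton (e.ne_zero j)
  -- uniqueness helper
  have huniq : ∀ φ φ' : L i →ₗ[F] L (i + 1),
      (∀ u : L i, ((u : V) + (φ u : V)) ∈ M i) →
      (∀ u : L i, ((u : V) + (φ' u : V)) ∈ M i) → φ = φ' := by
    intro φ φ' hφ hφ'
    ext u
    have hmem : ((φ u : V) - (φ' u : V)) ∈ M i := by
      have := sub_mem (hφ u) (hφ' u)
      simpa using this
    have hmem2 : ((φ u : V) - (φ' u : V)) ∈ span F {e (i + 1)} := by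
      rw [← hL (i + 1)]
      exact sub_mem (φ u).2 (φ' u).2
    have := normal_inf_right hn e i (c i : F) (by rw [← hM i]; exact hmem) hmem2
    rwa [sub_eq_zero] at this
  constructor
  · -- existence and uniqueness of φ
    set ψ : V →ₗ[F] V :=
      (LinearMap.toSpanSingleton F V ((c i : F) • e (i + 1))).comp (e.coord i) with hψ
    have hmap : ∀ x ∈ L i, ψ x ∈ L (i + 1) := by
      intro x _
      rw [hL (i + 1)]
      exact smul_mem _ _ (smul_mem _ _ (mem_span_singleton_self _))
    have hprop : ∀ u : L i, ((u : V) + (ψ.restrict hmap u : V)) ∈ M i := by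
      intro u
      have hu : (u : V) ∈ span F {e i} := by rw [← hL i]; exact u.2
      obtain ⟨t, ht⟩ := mem_span_singleton.mp hu
      have hψu : (ψ.restrict hmap u : V) = ψ (u : V) := rfl
      rw [hM i, hψu, ← ht]
      have : ψ (t • e i) = t • ((c i : F) • e (i + 1)) := by
        simp [hψ, LinearMap.toSpanSingleton_apply]
      rw [this, ← smul_add]
      exact smul_mem _ _ (mem_span_singleton_self _)
    exact ⟨ψ.restrict hmap, hprop, fun φ' hφ' => huniq φ' _ hφ' hprop⟩
  · -- bijectivity
    intro φ hφ
    haveI : FiniteDimensional F (L i) := FiniteDimensional.of_finrank_eq_succ (hfr i)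
    haveI : FiniteDimensional F (L (i + 1)) :=
      FiniteDimensional.of_finrank_eq_succ (hfr (i + 1))
    have hinj : Function.Injective φ := by
      rw [← LinearMap.ker_eq_bot, LinearMap.ker_eq_bot']
      intro u hu
      have h0 : (φ u : V) = 0 := by rw [hu]; rfl
      have hmem : (u : V) ∈ M i := by
        have := hφ u
        rwa [h0, add_zero] at this
      have hmem2 : (u : V) ∈ span F {e i} := by rw [← hL i]; exact u.2
      have := normal_inf_left hn e i (c i).ne_zero (by rw [← hM i]; exact hmem) hmem2
      exact Subtype.ext this
    exact ⟨hinj, (LinearMap.injective_iff_surjective_of_finrank_eq_finrank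
      (by rw [hfr i, hfr (i + 1)])).mp hinj⟩

lemma crossRatio_map {n : ℕ} [NeZero n] {L M : Fin n → Submodule F V} {a : Fˣ}
    (ha : IsGenCrossRatio F L M a) (g : V ≃ₗ[F] V) :
    IsGenCrossRatio F (fun i => (L i).map (g : V →ₗ[F] V))
      (fun i => (M i).map (g : V →ₗ[F] V)) a := by
  intro u p1 p2 p3
  set w : Fin (n + 1) → V := fun j => g.symm (u j) with hw
  have q1 : ∀ i : Fin n, w i.castSucc ∈ L i := by
    intro i
    obtain ⟨x, hx, hgx⟩ := p1 i
    have : w i.castSucc = x := by rw [hw]; simp [← hgx]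
    rwa [this]
  have q2 : w (Fin.last n) ∈ L 0 := by
    obtain ⟨x, hx, hgx⟩ := p2
    have : w (Fin.last n) = x := by rw [hw]; simp [← hgx]
    rwa [this]
  have q3 : ∀ i : Fin n, w i.castSucc + w i.succ ∈ M i := by
    intro i
    obtain ⟨x, hx, hgx⟩ := p3 i
    have : w i.castSucc + w i.succ = x := by
      rw [hw]
      simp only [← map_add]
      rw [← hgx]; simp
    rwa [this]
  have hkey := ha w q1 q2 q3
  have := congrArg g hkey
  simpa [hw] using this

lemma orbit_exists {n : ℕ} [NeZero n] (hn : 2 ≤ n) (e e' : Basis (Fin n) F V)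
    (c c' : Fin n → Fˣ) (hpc : (∏ i, c i) = ∏ i, c' i) :
    ∃ g : V ≃ₗ[F] V,
      (∀ i, (span F {e i}).map (g : V →ₗ[F] V) = span F {e' i}) ∧
      (∀ i, (span F {e i + (c i : F) • e (i + 1)}).map (g : V →ₗ[F] V) =
        span F {e' i + (c' i : F) • e' (i + 1)}) := by
  set r : Fin n → Fˣ := fun i => c' i * (c i)⁻¹ with hrdef
  have hr : (∏ i, r i) = 1 := by
    rw [hrdef]
    rw [Finset.prod_mul_distrib, Finset.prod_inv_distrib, ← hpc, mul_inv_cancel]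
  set D : Fin n → Fˣ := fun i => ∏ j ∈ Finset.range i.val, r ((j : Fin n)) with hDdef
  have hone : (1 : Fin n).val = 1 := by
    rw [Fin.val_one']; exact Nat.mod_eq_of_lt (by omega)
  have hD : ∀ i : Fin n, D (i + 1) = r i * D i := by
    intro i
    by_cases h : i.val + 1 < n
    · have hv : ((i + 1 : Fin n)).val = i.val + 1 := by
        rw [Fin.add_def, hone]; exact Nat.mod_eq_of_lt h
      rw [hDdef]
      simp only [hv]
      rw [Finset.prod_range_succ, Fin.cast_val_eq_self]
      exact mul_comm _ _
    · have hn' : i.val + 1 = n := by omega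
      have hv : ((i + 1 : Fin n)).val = 0 := by
        rw [Fin.add_def, hone]
        show (i.val + 1) % n = 0
        rw [hn', Nat.mod_self]
      have h2 : r i * D i = ∏ j ∈ Finset.range (i.val + 1), r ((j : Fin n)) := by
        rw [Finset.prod_range_succ, Fin.cast_val_eq_self]
        exact mul_comm _ _
      have hrange : Finset.range (i.val + 1) = Finset.range n := by rw [hn']
      have h3 : (∏ j ∈ Finset.range n, r ((j : Fin n))) = 1 := by
        rw [← Fin.prod_univ_eq_prod_range (fun j => r ((j : Fin n))) n]
        simpa [Fin.cast_val_eq_self] using hr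
      have h4 : D (i + 1) = 1 := by
        rw [hDdef]
        simp only
        rw [hv, Finset.range_zero, Finset.prod_empty]
      rw [h4, h2, hrange, h3]
  have hcD : ∀ i : Fin n, (c i : F) * ((D (i + 1)) : F) = (D i : F) * (c' i : F) := by
    intro i
    rw [hD i, hrdef]
    simp only
    push_cast
    field_simp
  set g : V ≃ₗ[F] V := e.equiv (e'.unitsSMul D) (Equiv.refl _) with hg
  have hge : ∀ i, g (e i) = (D i : F) • e' i := by
    intro i
    rw [hg, Basis.equiv_apply, Equiv.refl_apply, Basis.unitsSMul_apply]
    rfl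
  refine ⟨g, ?_, ?_⟩
  · intro i
    rw [Submodule.map_span, Set.image_singleton]
    have : (g : V →ₗ[F] V) (e i) = (D i : F) • e' i := hge i
    rw [this]
    exact span_singleton_smul_eq ((D i).isUnit.map (algebraMap F F)) _ |>.trans rfl
  · intro i
    rw [Submodule.map_span, Set.image_singleton]
    have hg2 : (g : V →ₗ[F] V) (e i + (c i : F) • e (i + 1)) =
        (D i : F) • (e' i + (c' i : F) • e' (i + 1)) := by
      rw [map_add, map_smul]
      show g (e i) + (c i : F) • g (e (i + 1)) = _
      rw [hge i, hge (i + 1), smul_smul, smul_add, smul_smul]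
      congr 2
      exact hcD i
    rw [hg2]
    exact span_singleton_smul_eq (D i).isUnit _

end Aux

/-- special configurations and the generalized cross-ratio.
(1) each `φ_i : L_i → L_{i+1}` (characterized by `u + φ_i(u) ∈ M_i`) exists, is unique and
bijective, and the composition `φ_{n−1} ∘ ⋯ ∘ φ_0` is multiplication by a unique scalar
`a ∈ F^*`, the generalized cross-ratio; (2) `a` is `GL(V)`-invariant, and two special
configurations have the same generalized cross-ratio iff they are in the same
`GL(V)`-orbit; (3) every `a ∈ F^*` is the generalized cross-ratio of some special
configuration.  Hence the generalized cross-ratio identifies special configurations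
modulo projective equivalence with `F^* = ℙ¹(F) ∖ {0, ∞}`. -/
theorem statement_12 (n : ℕ) [NeZero n] (hn : 2 ≤ n) [FiniteDimensional F V]
    (hV : finrank F V = n) :
    (∀ L M : Fin n → Submodule F V, IsSpecialConfiguration F L M →
      ((∀ i : Fin n,
          (∃! φ : L i →ₗ[F] L (i + 1), ∀ u : L i, ((u : V) + (φ u : V)) ∈ M i) ∧
          (∀ φ : L i →ₗ[F] L (i + 1),
            (∀ u : L i, ((u : V) + (φ u : V)) ∈ M i) → Function.Bijective φ)) ∧
        ∃! a : Fˣ, IsGenCrossRatio F L M a)) ∧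
    (∀ L M : Fin n → Submodule F V, IsSpecialConfiguration F L M →
      ∀ a : Fˣ, IsGenCrossRatio F L M a →
        (∀ g : V ≃ₗ[F] V,
          IsGenCrossRatio F (fun i => (L i).map (g : V →ₗ[F] V))
            (fun i => (M i).map (g : V →ₗ[F] V)) a) ∧
        (∀ L' M' : Fin n → Submodule F V, IsSpecialConfiguration F L' M' →
          ∀ a' : Fˣ, IsGenCrossRatio F L' M' a' →
            (a = a' ↔ ∃ g : V ≃ₗ[F] V,
              (∀ i, (L i).map (g : V →ₗ[F] V) = L' i) ∧
              (∀ i, (M i).map (g : V →ₗ[F] V) = M' i)))) ∧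
    (∀ a : Fˣ, ∃ L M : Fin n → Submodule F V,
      IsSpecialConfiguration F L M ∧ IsGenCrossRatio F L M a) := by
  refine ⟨?_, ?_, ?_⟩
  · intro L M hc
    obtain ⟨e, c, hL, hM⟩ := config_normal hn hV hc
    exact ⟨fun i => phi_lemma hn e c L M hL hM i,
      ⟨∏ i, c i, crossRatio_of_normal hn e c L M hL hM,
        fun a ha => crossRatio_unique_of_normal hn e c L M hL hM ha⟩⟩
  · intro L M hc a ha
    refine ⟨fun g => crossRatio_map ha g, ?_⟩
    intro L' M' hc' a' ha'
    obtain ⟨e, c, hL, hM⟩ := config_normal hn hV hc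
    obtain ⟨e', c', hL', hM'⟩ := config_normal hn hV hc'
    have hac : a = ∏ i, c i := crossRatio_unique_of_normal hn e c L M hL hM ha
    have hac' : a' = ∏ i, c' i := crossRatio_unique_of_normal hn e' c' L' M' hL' hM' ha'
    constructor
    · intro heq
      obtain ⟨g, hg1, hg2⟩ := orbit_exists hn e e' c c' (by rw [← hac, ← hac', heq])
      exact ⟨g, fun i => by rw [hL i, hg1 i, ← hL' i], fun i => by rw [hM i, hg2 i, ← hM' i]⟩
    · rintro ⟨g, hg1, hg2⟩
      have h := crossRatio_map ha g
      have hLe : (fun i => (L i).map (g : V →ₗ[F] V)) = L' := funext hg1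
      have hMe : (fun i => (M i).map (g : V →ₗ[F] V)) = M' := funext hg2
      rw [hLe, hMe] at h
      exact (crossRatio_unique_of_normal hn e' c' L' M' hL' hM' h).trans hac'.symm
  · intro a
    set b := finBasisOfFinrankEq F V hV with hb
    set c : Fin n → Fˣ := fun i => if i = 0 then a else 1 with hcdef
    refine ⟨fun i => span F {b i}, fun i => span F {b i + (c i : F) • b (i + 1)},
      normal_special hn b c, ?_⟩
    have hprod : (∏ i, c i) = a := by
      rw [hcdef]
      simp [Finset.prod_ite_eq']
    rw [← hprod]
    exact crossRatio_of_normal hn b c _ _ (fun i => rfl) (fun i => rfl)
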